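/- Buscher rules as an involution: define the map T on triples (g, b) of metric and B-field components on a circle bundle by ĝ₀₀ = 1/g₀₀, ĝ₀ᵢ = b₀ᵢ/g₀₀, ĝᵢⱼ = gᵢⱼ − (g₀ᵢg₀ⱼ − b₀ᵢb₀ⱼ)/g₀₀, b̂₀ᵢ = g₀ᵢ/g₀₀, b̂ᵢⱼ = bᵢⱼ + (g₀ᵢb₀ⱼ − b₀ᵢg₀ⱼ)/g₀₀. Then T is an involution: applying T twice returns the original (g, b). Moreover if g is positive definite then so is ĝ. -/

import Mathlib

open Matrix

noncomputable section

/-- The Buscher T-duality transform of the metric `g` on a circle bundle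
(circle direction indexed by `0`). -/
def buscherG {n : ℕ} (g b : Matrix (Fin (n + 1)) (Fin (n + 1)) ℝ) :
    Matrix (Fin (n + 1)) (Fin (n + 1)) ℝ :=
  fun a c =>
    if a = 0 then
      (if c = 0 then 1 / g 0 0 else b 0 c / g 0 0)
    else
      (if c = 0 then b 0 a / g 0 0
       else g a c - (g 0 a * g 0 c - b 0 a * b 0 c) / g 0 0)

/-- The Buscher T-duality transform of the B-field `b`. -/
def buscherB {n : ℕ} (g b : Matrix (Fin (n + 1)) (Fin (n + 1)) ℝ) :
    Matrix (Fin (n + 1)) (Fin (n + 1)) ℝ :=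
  fun a c =>
    if a = 0 then
      (if c = 0 then 0 else g 0 c / g 0 0)
    else
      (if c = 0 then -(g 0 a / g 0 0)
       else b a c + (g 0 a * b 0 c - b 0 a * g 0 c) / g 0 0)

end

/-- The Buscher rules are an involution: applying the T-duality transform twice
returns the original metric and B-field; moreover the dual of a positive-definite
metric is positive definite. -/
theorem buscher_involution
    {n : ℕ} (g b : Matrix (Fin (n + 1)) (Fin (n + 1)) ℝ)
    (hgs : ∀ a c, g a c = g c a) (hb : ∀ a c, b a c = -b c a)
    (hg00 : 0 < g 0 0) :
    buscherG (buscherG g b) (buscherB g b) = g ∧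
    buscherB (buscherG g b) (buscherB g b) = b ∧
    (g.PosDef → (buscherG g b).PosDef) := by

  have h0 : g 0 0 ≠ 0 := ne_of_gt hg00
  have h12 : buscherG (buscherG g b) (buscherB g b) = g ∧
      buscherB (buscherG g b) (buscherB g b) = b := by
    constructor <;> funext a c <;> by_cases ha : a = 0 <;> by_cases hc : c = 0 <;>
        simp [buscherG, buscherB, ha, hc]
    · field_simp
    · field_simp; exact hgs 0 a
    · field_simp
      linear_combination ((g 0 0)^2 * hgs c a + (g 0 0)^2 * hgs a c)/2
    · have := hb 0 0; linarith
    · field_simp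
    · field_simp
      linear_combination (-(2+g 0 0)/2) * hb a 0 + (g 0 0/2) * hb 0 a
    · field_simp; ring
  refine ⟨h12.1, h12.2, fun hg => ?_⟩
  refine Matrix.PosDef.of_dotProduct_mulVec_pos ?_ ?_
  · ext a c
    by_cases ha : a = 0 <;> by_cases hc : c = 0 <;>
      simp [buscherG, ha, hc, conjTranspose_apply]
    · linear_combination (1 + (g 0 0)⁻¹) * hgs c a + (g 0 0)⁻¹ * hgs a c
  · intro x hx
    set S1 : ℝ := ∑ i : Fin n, g 0 i.succ * x i.succ with hS1
    set S2 : ℝ := ∑ i : Fin n, b 0 i.succ * x i.succ with hS2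
    set y : Fin (n + 1) → ℝ := fun a => if a = 0 then -S1 / g 0 0 else x a with hy
    have key : star x ⬝ᵥ (buscherG g b *ᵥ x)
        = (x 0 + S2) ^ 2 / g 0 0 + star y ⬝ᵥ (g *ᵥ y) := by
      simp only [star_trivial, dotProduct, mulVec, Fin.sum_univ_succ, buscherG, hy,
        if_pos, if_neg (Fin.succ_ne_zero _), reduceIte]
      have e1 : ∑ i : Fin n, b 0 i.succ / g 0 0 * x i.succ = S2 / g 0 0 := by
        rw [hS2, Finset.sum_div]
        exact Finset.sum_congr rfl fun i _ => div_mul_eq_mul_div _ _ _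
      have e2 : ∀ i : Fin n,
          ∑ j : Fin n, (g i.succ j.succ -
              (g 0 i.succ * g 0 j.succ - b 0 i.succ * b 0 j.succ) / g 0 0) * x j.succ
            = (∑ j : Fin n, g i.succ j.succ * x j.succ)
              - g 0 i.succ * S1 / g 0 0 + b 0 i.succ * S2 / g 0 0 := by
        intro i
        rw [hS1, hS2, Finset.mul_sum, Finset.mul_sum, Finset.sum_div, Finset.sum_div,
          ← Finset.sum_sub_distrib, ← Finset.sum_add_distrib]
        refine Finset.sum_congr rfl fun j _ => by field_simp; ring
      rw [e1]
      simp only [e2]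
      have e3 : ∀ i : Fin n, x i.succ * (b 0 i.succ / g 0 0 * x 0 +
          ((∑ j : Fin n, g i.succ j.succ * x j.succ)
            - g 0 i.succ * S1 / g 0 0 + b 0 i.succ * S2 / g 0 0))
          = (x 0 / g 0 0) * (b 0 i.succ * x i.succ)
            + x i.succ * (∑ j : Fin n, g i.succ j.succ * x j.succ)
            - (S1 / g 0 0) * (g 0 i.succ * x i.succ)
            + (S2 / g 0 0) * (b 0 i.succ * x i.succ) := fun i => by ring
      have e4 : ∀ i : Fin n, x i.succ * (g i.succ 0 * (-S1 / g 0 0) +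
          ∑ j : Fin n, g i.succ j.succ * x j.succ)
          = -((S1 / g 0 0) * (g 0 i.succ * x i.succ))
            + x i.succ * (∑ j : Fin n, g i.succ j.succ * x j.succ) := fun i => by
        rw [hgs i.succ 0]; ring
      simp only [e3, e4]
      simp only [Finset.sum_add_distrib, Finset.sum_sub_distrib, Finset.sum_neg_distrib,
        ← Finset.mul_sum, ← hS1, ← hS2]
      field_simp
      ring
    rw [key]
    by_cases hy0 : y = 0
    · have hxs : ∀ i : Fin n, x i.succ = 0 := fun i => by
        have := congrFun hy0 i.succ
        simpa [hy, Fin.succ_ne_zero] using this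
      have hx0 : x 0 ≠ 0 := by
        intro h
        apply hx
        funext a
        refine Fin.cases ?_ ?_ a
        · exact h
        · exact hxs
      have hS2z : S2 = 0 := by
        rw [hS2]
        exact Finset.sum_eq_zero fun i _ => by rw [hxs i, mul_zero]
      rw [hy0, hS2z]
      simp only [star_trivial, add_zero]
      have : (0:ℝ) < x 0 ^ 2 / g 0 0 := div_pos (by positivity) hg00
      simpa using this
    · have h1 := hg.dotProduct_mulVec_pos hy0
      have h2 : (0:ℝ) ≤ (x 0 + S2) ^ 2 / g 0 0 := div_nonneg (sq_nonneg _) hg00.le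
      linarith
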